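/- Let n be a natural number, let 𝔽₂ⁿ = (Fin n → ZMod 2), and let (𝔽₂ⁿ)_[n] be the copies matroid of the complete binary matroid of rank n with n copies, i.e., the matroid on 𝔽₂ⁿ × Fin n in which the rank of a set S equals the dimension of the 𝔽₂-linear span of the projection of S to 𝔽₂ⁿ. If f is a bijection of 𝔽₂ⁿ × Fin n that preserves this rank function (for every set S, the rank of f(S) equals the rank of S), then there exist an 𝔽₂-linear automorphism A of 𝔽₂ⁿ and, for each u ∈ 𝔽₂ⁿ, a permutation σ_u of Fin n, such that f(u, j) = (A(u), σ_u(j)) for all u ∈ 𝔽₂ⁿ and j ∈ Fin n. -/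

import Mathlib

open Set

/-- The rank of a set in a matroid: the supremum of the cardinalities of its
independent subsets. -/
noncomputable def mRank {α : Type*} (M : Matroid α) (S : Set α) : ℕ∞ :=
  ⨆ I ∈ {I : Set α | M.Indep I ∧ I ⊆ S}, I.encard

/-- The rank of a set of vectors: the dimension of its linear span. -/
noncomputable def spanRank (K : Type*) [Field K] {W : Type*} [AddCommGroup W] [Module K W]
    (S : Set W) : ℕ :=
  Module.finrank K (Submodule.span K S)

/-- The rank function of the copies matroid `(𝔽₂ⁿ)_[n]`: the rank of a set of element-copy
pairs is the dimension of the `𝔽₂`-span of its projection to `𝔽₂ⁿ`. -/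
noncomputable def copyRank (n : ℕ) (S : Set ((Fin n → ZMod 2) × Fin n)) : ℕ :=
  spanRank (ZMod 2) (Prod.fst '' S)

lemma aux_rank0 {n : ℕ} (a : Fin n → ZMod 2) :
    spanRank (ZMod 2) ({a} : Set (Fin n → ZMod 2)) = 0 ↔ a = 0 := by
  constructor
  · intro h; by_contra ha
    rw [spanRank, finrank_span_singleton ha] at h; omega
  · rintro rfl; simp [spanRank, Submodule.span_zero_singleton]

lemma aux_rank1_le {n : ℕ} (a : Fin n → ZMod 2) :
    spanRank (ZMod 2) ({a} : Set (Fin n → ZMod 2)) ≤ 1 := by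
  by_cases ha : a = 0
  · subst ha; rw [spanRank, Submodule.span_zero_singleton]; simp
  · rw [spanRank, finrank_span_singleton ha]

lemma aux_add_self {n : ℕ} (x : Fin n → ZMod 2) : x + x = 0 := by
  funext i; exact CharTwo.add_self_eq_zero (x i)

lemma aux_pair_indep {n : ℕ} {a b : Fin n → ZMod 2} (ha : a ≠ 0) (hb : b ≠ 0) (hab : a ≠ b) :
    LinearIndependent (ZMod 2) ![a, b] := by
  rw [LinearIndependent.pair_iff]
  intro s t hst
  have key : a + b ≠ 0 := by
    intro h
    apply hab
    have hbb : b + b = 0 := aux_add_self b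
    calc a = a + (b + b) := by rw [hbb, add_zero]
      _ = (a + b) + b := (add_assoc a b b).symm
      _ = b := by rw [h, zero_add]
  have h01 : ∀ c : ZMod 2, c = 0 ∨ c = 1 := by decide
  rcases h01 s with rfl | rfl <;> rcases h01 t with rfl | rfl <;> simp_all

lemma aux_rank_pair {n : ℕ} {a b : Fin n → ZMod 2} (ha : a ≠ 0) (hb : b ≠ 0) (hab : a ≠ b) :
    spanRank (ZMod 2) ({a, b} : Set (Fin n → ZMod 2)) = 2 := by
  have h := finrank_span_eq_card (aux_pair_indep ha hb hab)
  have hr : Set.range ![a, b] = {a, b} := by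
    simp [Matrix.range_cons, Matrix.range_empty, Set.pair_comm]
  rw [hr] at h
  simpa [spanRank] using h

lemma aux_mem_span_pair {n : ℕ} {a b x : Fin n → ZMod 2}
    (h : x ∈ Submodule.span (ZMod 2) ({a, b} : Set (Fin n → ZMod 2))) :
    x = 0 ∨ x = a ∨ x = b ∨ x = a + b := by
  rw [Submodule.mem_span_pair] at h
  obtain ⟨c, d, h⟩ := h
  have h01 : ∀ c : ZMod 2, c = 0 ∨ c = 1 := by decide
  rcases h01 c with rfl | rfl <;> rcases h01 d with rfl | rfl <;> simp_all

/-- Every rank-preserving bijection of the copies matroid `(𝔽₂ⁿ)_[n]` decomposes as an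
`𝔽₂`-linear automorphism `A` of `𝔽₂ⁿ` together with, for each `u ∈ 𝔽₂ⁿ`, a permutation of
the copy indices: `f (u, j) = (A u, σ_u j)`. -/
theorem stmt5 (n : ℕ)
    (f : ((Fin n → ZMod 2) × Fin n) ≃ ((Fin n → ZMod 2) × Fin n))
    (hf : ∀ S : Set ((Fin n → ZMod 2) × Fin n), copyRank n (f '' S) = copyRank n S) :
    ∃ (A : (Fin n → ZMod 2) ≃ₗ[ZMod 2] (Fin n → ZMod 2))
      (σ : (Fin n → ZMod 2) → Equiv.Perm (Fin n)),
      ∀ (u : Fin n → ZMod 2) (j : Fin n), f (u, j) = (A u, σ u j) := by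
  rcases Nat.eq_zero_or_pos n with hn | hn
  · subst hn
    exact ⟨LinearEquiv.refl _ _, fun _ => Equiv.refl _, fun u j => j.elim0⟩
  have i₀ : Fin n := ⟨0, hn⟩
  -- step 1 : the first coordinate of f (u, j) does not depend on j
  have hsingle : ∀ p : (Fin n → ZMod 2) × Fin n,
      spanRank (ZMod 2) {(f p).1} = spanRank (ZMod 2) {p.1} := by
    intro p
    have := hf {p}
    simpa [copyRank, Set.image_singleton] using this
  have hfst : ∀ (u : Fin n → ZMod 2) (j j' : Fin n), (f (u, j)).1 = (f (u, j')).1 := by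
    intro u j j'
    set a := (f (u, j)).1 with ha'
    set b := (f (u, j')).1 with hb'
    have h1 : spanRank (ZMod 2) {a} = spanRank (ZMod 2) {u} := hsingle (u, j)
    have h2 : spanRank (ZMod 2) {b} = spanRank (ZMod 2) {u} := hsingle (u, j')
    have h3 : spanRank (ZMod 2) {a, b} = spanRank (ZMod 2) {u} := by
      have := hf {(u, j), (u, j')}
      simpa [copyRank, Set.image_insert_eq, Set.image_singleton, Set.pair_eq_singleton] using this
    by_cases hu : u = 0
    · subst hu
      have h0 : spanRank (ZMod 2) ({(0 : Fin n → ZMod 2)} : Set _) = 0 := (aux_rank0 _).mpr rfl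
      have : a = 0 := (aux_rank0 a).mp (by rw [h1, h0])
      have hb0 : b = 0 := (aux_rank0 b).mp (by rw [h2, h0])
      rw [this, hb0]
    · by_contra hab
      have hu1 : spanRank (ZMod 2) ({u} : Set _) = 1 := by
        rw [spanRank, finrank_span_singleton hu]
      have haz : a ≠ 0 := fun h => hu ((aux_rank0 u).mp (by rw [← h1]; exact (aux_rank0 a).mpr h))
      have hbz : b ≠ 0 := fun h => hu ((aux_rank0 u).mp (by rw [← h2]; exact (aux_rank0 b).mpr h))
      have := aux_rank_pair haz hbz hab
      rw [h3, hu1] at this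
      omega
  set g : (Fin n → ZMod 2) → (Fin n → ZMod 2) := fun u => (f (u, i₀)).1 with hg'
  -- master rank-transfer lemma
  have hg : ∀ T : Set (Fin n → ZMod 2),
      spanRank (ZMod 2) (g '' T) = spanRank (ZMod 2) T := by
    intro T
    have := hf ((fun u => (u, i₀)) '' T)
    simpa [copyRank, Set.image_image] using this
  have hg0 : g 0 = 0 := by
    have := hg {0}
    rw [Set.image_singleton] at this
    exact (aux_rank0 _).mp (by rw [this]; exact (aux_rank0 _).mpr rfl)
  have hginj : Function.Injective g := by
    intro u v huv
    by_contra hne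
    have hzero : ∀ w : Fin n → ZMod 2, g w = 0 → w = 0 := by
      intro w hw
      have := hg {w}
      rw [Set.image_singleton, hw] at this
      exact (aux_rank0 _).mp (by rw [← this]; exact (aux_rank0 _).mpr rfl)
    have hu0 : u ≠ 0 := fun h => hne (by rw [h, ← hzero v (by rw [← huv, h, hg0])])
    have hv0 : v ≠ 0 := fun h => hne (by rw [h, hzero u (by rw [huv, h, hg0])])
    have h2 : spanRank (ZMod 2) (g '' {u, v}) = 2 := by
      rw [hg {u, v}]; exact aux_rank_pair hu0 hv0 hne
    have him : g '' {u, v} = {g u} := by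
      rw [Set.image_pair, huv, Set.pair_eq_singleton]
    rw [him] at h2
    have := aux_rank1_le (g u)
    omega
  have hgsurj : Function.Surjective g := by
    intro w
    refine ⟨(f.symm (w, i₀)).1, ?_⟩
    have h1 : f ((f.symm (w, i₀)).1, (f.symm (w, i₀)).2) = (w, i₀) := by
      rw [Prod.mk.eta]; exact f.apply_symm_apply _
    have h2 := hfst (f.symm (w, i₀)).1 i₀ (f.symm (w, i₀)).2
    show (f ((f.symm (w, i₀)).1, i₀)).1 = w
    rw [h2, h1]
  -- additivity of g
  have hadd : ∀ u v, g (u + v) = g u + g v := by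
    intro u v
    by_cases hu : u = 0
    · rw [hu, zero_add, hg0, zero_add]
    by_cases hv : v = 0
    · rw [hv, add_zero, hg0, add_zero]
    by_cases huv : u = v
    · rw [huv, aux_add_self, hg0, aux_add_self]
    have hw0 : u + v ≠ 0 := by
      intro h
      apply huv
      have hbb : v + v = 0 := aux_add_self v
      calc u = u + (v + v) := by rw [hbb, add_zero]
        _ = (u + v) + v := (add_assoc u v v).symm
        _ = v := by rw [h, zero_add]
    have hwu : u + v ≠ u := fun h => hv (by
      have := congrArg (fun x => u + x) (aux_add_self u)
      nth_rewrite 2 [← add_zero u] at h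
      exact add_left_cancel h)
    have hwv : u + v ≠ v := fun h => hu (by
      nth_rewrite 2 [← zero_add v] at h
      exact add_right_cancel h)
    have r2 : spanRank (ZMod 2) ({g u, g v} : Set _) = 2 := by
      have := hg {u, v}
      rw [Set.image_pair] at this
      rw [this]; exact aux_rank_pair hu hv huv
    have hsp : Submodule.span (ZMod 2) ({u, v, u + v} : Set _)
        = Submodule.span (ZMod 2) ({u, v} : Set _) := by
      apply le_antisymm
      · rw [Submodule.span_le]
        rintro x hx
        simp only [Set.mem_insert_iff, Set.mem_singleton_iff] at hx
        rcases hx with rfl | rfl | rfl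
        · exact Submodule.subset_span (by simp)
        · exact Submodule.subset_span (by simp)
        · exact Submodule.add_mem _ (Submodule.subset_span (by simp))
            (Submodule.subset_span (by simp))
      · exact Submodule.span_mono (by intro x hx; simp only [Set.mem_insert_iff,
          Set.mem_singleton_iff] at hx ⊢; tauto)
    have r3 : spanRank (ZMod 2) ({g u, g v, g (u + v)} : Set _) = 2 := by
      have h := hg {u, v, u + v}
      have him : g '' {u, v, u + v} = {g u, g v, g (u + v)} := by
        rw [Set.image_insert_eq, Set.image_insert_eq, Set.image_singleton]
      rw [him] at h
      rw [h, spanRank, hsp, ← spanRank]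
      exact aux_rank_pair hu hv huv
    have hle : Submodule.span (ZMod 2) ({g u, g v} : Set _)
        ≤ Submodule.span (ZMod 2) ({g u, g v, g (u + v)} : Set _) :=
      Submodule.span_mono (by intro x hx; simp only [Set.mem_insert_iff,
        Set.mem_singleton_iff] at hx ⊢; tauto)
    have heq : Submodule.span (ZMod 2) ({g u, g v} : Set _)
        = Submodule.span (ZMod 2) ({g u, g v, g (u + v)} : Set _) := by
      apply Submodule.eq_of_le_of_finrank_le hle
      rw [spanRank] at r2 r3
      omega
    have hmem : g (u + v) ∈ Submodule.span (ZMod 2) ({g u, g v} : Set _) := by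
      rw [heq]; exact Submodule.subset_span (by simp)
    rcases aux_mem_span_pair hmem with h | h | h | h
    · exact absurd (hginj (h.trans hg0.symm)) hw0
    · exact absurd (hginj h) hwu
    · exact absurd (hginj h) hwv
    · exact h
  have hsmul : ∀ (c : ZMod 2) (u : Fin n → ZMod 2), g (c • u) = c • g u := by
    intro c u
    rcases (show c = 0 ∨ c = 1 by revert c; decide) with rfl | rfl
    · simp [hg0]
    · simp
  have hbij : Function.Bijective g := ⟨hginj, hgsurj⟩
  let L : (Fin n → ZMod 2) →ₗ[ZMod 2] (Fin n → ZMod 2) :=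
    { toFun := g, map_add' := hadd, map_smul' := hsmul }
  refine ⟨LinearEquiv.ofBijective L hbij, fun u => Equiv.ofBijective
    (fun j => (f (u, j)).2) (Finite.injective_iff_bijective.mp ?_), ?_⟩
  · intro j j' hjj
    have : f (u, j) = f (u, j') := Prod.ext (hfst u j j') hjj
    simpa using f.injective this
  · intro u j
    exact Prod.ext (hfst u j i₀) rfl
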